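/- Let p ≥ 1 and let F : [−π, π] → ℂ^p and G, L : [−π, π] → ℂ be measurable, with L(ω)·G(ω) = 1 for almost every ω. Assume ω ↦ |F(ω)|₂²·|L(ω)|², ω ↦ |G(ω)|², and ω ↦ |F(ω)|₂ are integrable. Then ((1/2π) ∫_{−π}^{π} |F(ω)|₂² |L(ω)|² dω) · ((1/2π) ∫_{−π}^{π} |G(ω)|² dω) ≥ ((1/2π) ∫_{−π}^{π} |F(ω)|₂ dω)². (Lower bound on the mean squared error of any zero-forcing-equalization mechanism for a SIMO filter F with pre-filter G of left inverse L.) -/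

import Mathlib

open MeasureTheory Real

noncomputable instance (ι : Type*) : MeasurableSpace (EuclideanSpace ℂ ι) :=
  MeasurableSpace.comap (WithLp.ofLp (p := 2)) MeasurableSpace.pi

theorem zfe_simo_lower_bound (p : ℕ) (hp : 1 ≤ p)
    (F : ℝ → EuclideanSpace ℂ (Fin p)) (G L : ℝ → ℂ)
    (hF : Measurable F) (hG : Measurable G) (hL : Measurable L)
    (hinv : ∀ᵐ ω ∂(volume.restrict (Set.Icc (-π) π)), L ω * G ω = 1)
    (hFL : IntegrableOn (fun ω => ‖F ω‖ ^ 2 * ‖L ω‖ ^ 2) (Set.Icc (-π) π))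
    (hG2 : IntegrableOn (fun ω => ‖G ω‖ ^ 2) (Set.Icc (-π) π))
    (hFn : IntegrableOn (fun ω => ‖F ω‖) (Set.Icc (-π) π)) :
    ((1 / (2 * π)) * ∫ ω in Set.Icc (-π) π, ‖F ω‖ ^ 2 * ‖L ω‖ ^ 2) *
        ((1 / (2 * π)) * ∫ ω in Set.Icc (-π) π, ‖G ω‖ ^ 2) ≥
      ((1 / (2 * π)) * ∫ ω in Set.Icc (-π) π, ‖F ω‖) ^ 2 := by
  set μ := volume.restrict (Set.Icc (-π) π) with hμ
  -- measurability of ‖F ·‖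
  have hFnm : Measurable fun ω => ‖F ω‖ := by
    have : (fun ω => ‖F ω‖) = fun ω => Real.sqrt (∑ i, ‖F ω i‖ ^ 2) := by
      funext ω; rw [EuclideanSpace.norm_eq]
    rw [this]
    exact (Finset.measurable_sum _ fun i _ =>
      (((measurable_pi_apply i).comp ((comap_measurable _).comp hF)).norm.pow_const 2)).sqrt
  set f : ℝ → ℝ := fun ω => ‖F ω‖ * ‖L ω‖ with hf
  set g : ℝ → ℝ := fun ω => ‖G ω‖ with hg
  have hfm : Measurable f := hFnm.mul hL.norm
  have hgm : Measurable g := hG.norm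
  have hf2 : Integrable (fun ω => f ω ^ 2) μ := by
    have : (fun ω => f ω ^ 2) = fun ω => ‖F ω‖ ^ 2 * ‖L ω‖ ^ 2 := by
      funext ω; simp [hf, mul_pow]
    rw [this]; exact hFL
  have hfmem : MemLp f 2 μ := (memLp_two_iff_integrable_sq hfm.aestronglyMeasurable).2 hf2
  have hgmem : MemLp g 2 μ := (memLp_two_iff_integrable_sq hgm.aestronglyMeasurable).2 hG2
  have hpq : (2 : ℝ).HolderConjugate 2 := Real.holderConjugate_iff.mpr ⟨one_lt_two, by norm_num⟩
  have hfnn : 0 ≤ᵐ[μ] f := Filter.Eventually.of_forall fun ω =>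
    mul_nonneg (norm_nonneg _) (norm_nonneg _)
  have hgnn : 0 ≤ᵐ[μ] g := Filter.Eventually.of_forall fun ω => norm_nonneg _
  have hmem2 : MemLp f (ENNReal.ofReal 2) μ := by rwa [show ENNReal.ofReal 2 = 2 by norm_num]
  have hmem2' : MemLp g (ENNReal.ofReal 2) μ := by rwa [show ENNReal.ofReal 2 = 2 by norm_num]
  have holder := MeasureTheory.integral_mul_le_Lp_mul_Lq_of_nonneg hpq hfnn hgnn hmem2 hmem2'
  -- rewrite rpow 2 as pow 2
  have hrw : ∀ h : ℝ → ℝ, (∫ a, h a ^ (2 : ℝ) ∂μ) = ∫ a, h a ^ 2 ∂μ := by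
    intro h; congr 1; funext a
    rw [show (2 : ℝ) = ((2 : ℕ) : ℝ) by norm_num, Real.rpow_natCast]
  rw [hrw f, hrw g] at holder
  set A := ∫ a, f a ^ 2 ∂μ with hA
  set B := ∫ a, g a ^ 2 ∂μ with hB
  have hAnn : 0 ≤ A := integral_nonneg fun a => sq_nonneg _
  have hBnn : 0 ≤ B := integral_nonneg fun a => sq_nonneg _
  -- ∫ ‖F‖ = ∫ f * g
  have hIeq : (∫ ω, ‖F ω‖ ∂μ) = ∫ a, f a * g a ∂μ := by
    refine integral_congr_ae ?_
    filter_upwards [hinv] with ω hω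
    have : ‖L ω‖ * ‖G ω‖ = 1 := by rw [← norm_mul, hω, norm_one]
    simp only [hf, hg]
    rw [mul_assoc, this, mul_one]
  have hInn : 0 ≤ ∫ ω, ‖F ω‖ ∂μ := integral_nonneg fun a => norm_nonneg _
  have hsq : (∫ a, f a * g a ∂μ) ^ 2 ≤ A * B := by
    have h1 : A ^ (1 / (2:ℝ)) = Real.sqrt A := (Real.sqrt_eq_rpow A).symm
    have h2 : B ^ (1 / (2:ℝ)) = Real.sqrt B := (Real.sqrt_eq_rpow B).symm
    rw [h1, h2] at holder
    calc (∫ a, f a * g a ∂μ) ^ 2 ≤ (Real.sqrt A * Real.sqrt B) ^ 2 := by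
          apply pow_le_pow_left₀ (by rw [← hIeq]; exact hInn) holder
      _ = A * B := by
          rw [mul_pow, Real.sq_sqrt hAnn, Real.sq_sqrt hBnn]
  -- assemble
  have hAeq : (∫ ω, ‖F ω‖ ^ 2 * ‖L ω‖ ^ 2 ∂μ) = A := by
    rw [hA]; congr 1; funext a; simp [hf, mul_pow]

  rw [ge_iff_le, hAeq, hIeq]
  have hc : (0:ℝ) < 1 / (2 * π) := by positivity
  nlinarith [hsq, sq_nonneg (1 / (2 * π)), hc.le, mul_le_mul_of_nonneg_left hsq (sq_nonneg (1 / (2 * π)))]
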